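/- Let N ≥ 3 be an integer, λ > 0, p > 1, b > 0. Let u₀ ∈ C²[0,b] solve u₀'' + ((N-1)/r)u₀' + λu₀ + u₀^p = 0 on (0,b) with u₀'(0) = 0, u₀(b) = 0, and u₀ > 0 on [0,b). Let φ ∈ C²[0,∞) solve φ'' + ((N-1)/r)φ' + λφ = 0 with φ(0) = 1, φ'(0) = 0. Then φ(r) > 0 for all r ∈ [0,b]. -/

import Mathlib

open Real Filter Set
open Topology

theorem stmt_5 (N : ℕ) (hN : 3 ≤ N) (lam : ℝ) (hlam : 0 < lam) (p : ℝ) (hp : 1 < p)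
    (b : ℝ) (hb : 0 < b) (u₀ : ℝ → ℝ) (hu₀ : ContDiff ℝ 2 u₀)
    (hequ : ∀ r ∈ Set.Ioo (0:ℝ) b,
      deriv (deriv u₀) r + (((N:ℝ) - 1) / r) * deriv u₀ r + lam * u₀ r + (u₀ r) ^ p = 0)
    (hu₀' : deriv u₀ 0 = 0) (hu₀b : u₀ b = 0)
    (hu₀pos : ∀ r ∈ Set.Ico (0:ℝ) b, 0 < u₀ r)
    (φ : ℝ → ℝ) (hφ : ContDiff ℝ 2 φ)
    (heqφ : ∀ r ∈ Set.Ioi (0:ℝ),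
      deriv (deriv φ) r + (((N:ℝ) - 1) / r) * deriv φ r + lam * φ r = 0)
    (hφ0 : φ 0 = 1) (hφ'0 : deriv φ 0 = 0) :
    ∀ r ∈ Set.Icc (0:ℝ) b, 0 < φ r := by
  -- regularity facts
  have hφd : Differentiable ℝ φ := hφ.differentiable (by norm_num)
  have hφ1 : ContDiff ℝ 1 (deriv φ) :=
    (contDiff_succ_iff_deriv.mp (show ContDiff ℝ (1+1) φ by norm_num; exact hφ)).2.2
  have hφ'd : Differentiable ℝ (deriv φ) := hφ1.differentiable one_ne_zero
  have hud : Differentiable ℝ u₀ := hu₀.differentiable (by norm_num)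
  have hu1 : ContDiff ℝ 1 (deriv u₀) :=
    (contDiff_succ_iff_deriv.mp (show ContDiff ℝ (1+1) u₀ by norm_num; exact hu₀)).2.2
  have hu'd : Differentiable ℝ (deriv u₀) := hu1.differentiable one_ne_zero
  by_contra hcon
  push_neg at hcon
  obtain ⟨r₁, hr₁, hr₁le⟩ := hcon
  -- first zero of φ
  set S : Set ℝ := {r | r ∈ Icc 0 b ∧ φ r ≤ 0} with hS
  have hSclosed : IsClosed S := (isClosed_Icc.preimage continuous_id).inter
    (isClosed_Iic.preimage hφd.continuous)
  have hSne : S.Nonempty := ⟨r₁, hr₁, hr₁le⟩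
  have hSbdd : BddBelow S := ⟨0, fun x hx => hx.1.1⟩
  set r₀ : ℝ := sInf S with hr₀def
  have hr₀S : r₀ ∈ S := hSclosed.csInf_mem hSne hSbdd
  have hr₀Icc : r₀ ∈ Icc 0 b := hr₀S.1
  have hr₀pos : 0 < r₀ := by
    rcases lt_or_eq_of_le hr₀Icc.1 with h | h
    · exact h
    · exfalso; have := hr₀S.2; rw [← h, hφ0] at this; linarith
  have hφposlt : ∀ r ∈ Ico (0:ℝ) r₀, 0 < φ r := by
    intro r hr
    by_contra hle
    push_neg at hle
    have : r ∈ S := ⟨⟨hr.1, le_trans hr.2.le hr₀Icc.2⟩, hle⟩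
    exact absurd (csInf_le hSbdd this) (not_le.mpr hr.2)
  have hφr₀ : φ r₀ = 0 := by
    refine le_antisymm hr₀S.2 ?_
    have htend : Tendsto φ (𝓝[<] r₀) (𝓝 (φ r₀)) :=
      (hφd.continuous.tendsto r₀).mono_left nhdsWithin_le_nhds
    refine ge_of_tendsto htend ?_
    filter_upwards [Ioo_mem_nhdsLT_of_mem ⟨hr₀pos, le_rfl⟩] with y hy
    exact (hφposlt y ⟨hy.1.le, hy.2⟩).le
  -- Wronskian
  set n : ℕ := N - 1 with hn
  have hn1 : 1 ≤ n := by omega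
  have hncast : ((N : ℝ) - 1) = (n : ℝ) := by
    have : (N : ℝ) = (n : ℝ) + 1 := by rw [hn]; push_cast [Nat.cast_sub (by omega : 1 ≤ N)]; ring
    linarith
  set W : ℝ → ℝ := fun r => r ^ n * (deriv φ r * u₀ r - φ r * deriv u₀ r) with hW
  have hWcont : Continuous W := by
    apply (continuous_pow n).mul
    exact (hφ1.continuous.mul hud.continuous).sub (hφd.continuous.mul hu1.continuous)
  have hWderiv : ∀ r ∈ Ioo (0:ℝ) r₀, HasDerivAt W (r ^ n * (φ r * u₀ r ^ p)) r := by
    intro r hr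
    have hrb : r ∈ Ioo (0:ℝ) b := ⟨hr.1, lt_of_lt_of_le hr.2 hr₀Icc.2⟩
    have hr0 : r ≠ 0 := ne_of_gt hr.1
    have d1 : HasDerivAt φ (deriv φ r) r := (hφd r).hasDerivAt
    have d2 : HasDerivAt (deriv φ) (deriv (deriv φ) r) r := (hφ'd r).hasDerivAt
    have d3 : HasDerivAt u₀ (deriv u₀ r) r := (hud r).hasDerivAt
    have d4 : HasDerivAt (deriv u₀) (deriv (deriv u₀) r) r := (hu'd r).hasDerivAt
    have dpow : HasDerivAt (fun x : ℝ => x ^ n) ((n : ℝ) * r ^ (n - 1)) r := hasDerivAt_pow n r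
    have dA : HasDerivAt (fun x => deriv φ x * u₀ x - φ x * deriv u₀ x)
        (deriv (deriv φ) r * u₀ r + deriv φ r * deriv u₀ r
          - (deriv φ r * deriv u₀ r + φ r * deriv (deriv u₀) r)) r := (d2.mul d3).sub (d1.mul d4)
    have := dpow.mul dA
    refine this.congr_deriv ?_
    symm
    have e1 := heqφ r hrb.1
    have e2 := hequ r hrb
    have hφ'' : deriv (deriv φ) r = -((((N:ℝ) - 1) / r) * deriv φ r + lam * φ r) := by linarith
    have hu'' : deriv (deriv u₀) r
        = -((((N:ℝ) - 1) / r) * deriv u₀ r + lam * u₀ r + u₀ r ^ p) := by linarith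
    rw [hφ'', hu'', hncast]
    have hrn : r ^ n = r ^ (n - 1) * r := by
      rw [← pow_succ]; congr 1; omega
    rw [hrn]
    field_simp
    ring
  -- strict monotonicity of W on [0, r₀]
  have hmono : StrictMonoOn W (Icc 0 r₀) := by
    apply strictMonoOn_of_deriv_pos (convex_Icc 0 r₀) hWcont.continuousOn
    intro x hx
    rw [interior_Icc] at hx
    rw [(hWderiv x hx).deriv]
    have hx0 : (0:ℝ) < x := hx.1
    have hφx : 0 < φ x := hφposlt x ⟨hx.1.le, hx.2⟩
    have hux : 0 < u₀ x := hu₀pos x ⟨hx.1.le, lt_of_lt_of_le hx.2 hr₀Icc.2⟩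
    positivity
  have hW0 : W 0 = 0 := by
    simp [hW, zero_pow (by omega : n ≠ 0)]
  have hWr₀pos : 0 < W r₀ := by
    have := hmono (left_mem_Icc.mpr hr₀pos.le) (right_mem_Icc.mpr hr₀pos.le) hr₀pos
    rwa [hW0] at this
  -- sign of W at r₀
  have hφ'r₀ : deriv φ r₀ ≤ 0 := by
    have hslope : Tendsto (slope φ r₀) (𝓝[≠] r₀) (𝓝 (deriv φ r₀)) :=
      hasDerivAt_iff_tendsto_slope.mp (hφd r₀).hasDerivAt
    have hslope' : Tendsto (slope φ r₀) (𝓝[<] r₀) (𝓝 (deriv φ r₀)) :=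
      hslope.mono_left (nhdsWithin_mono _ (fun y hy => ne_of_lt hy))
    refine le_of_tendsto hslope' ?_
    filter_upwards [Ioo_mem_nhdsLT_of_mem ⟨hr₀pos, le_rfl⟩] with y hy
    have hφy : 0 < φ y := hφposlt y ⟨hy.1.le, hy.2⟩
    rw [slope_def_field, hφr₀]
    apply div_nonpos_of_nonneg_of_nonpos (by linarith) (by linarith [hy.2])
  have hu₀r₀ : 0 ≤ u₀ r₀ := by
    rcases lt_or_eq_of_le hr₀Icc.2 with h | h
    · exact (hu₀pos r₀ ⟨hr₀Icc.1, h⟩).le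
    · rw [h, hu₀b]
  have hWr₀nonpos : W r₀ ≤ 0 := by
    have : W r₀ = r₀ ^ n * (deriv φ r₀ * u₀ r₀) := by
      simp [hW, hφr₀]
    rw [this]
    apply mul_nonpos_of_nonneg_of_nonpos (by positivity)
    exact mul_nonpos_of_nonpos_of_nonneg hφ'r₀ hu₀r₀
  linarith
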